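/- Let A and B be the 4×4 integer matrices A = [[−1,0,−1,−1],[0,1,0,0],[0,0,0,−1],[0,0,−1,0]] and B = [[0,1,0,0],[1,0,0,0],[−1,1,−1,0],[0,0,0,1]]. Then the characteristic polynomial of the product A⁴·B·A·B equals X⁴ − 2X³ − 30X² − 2X + 1. -/

import Mathlib

open Polynomial Matrix

theorem mul_fin_four' {α : Type*} [NonUnitalNonAssocSemiring α]
    (a11 a12 a13 a14 a21 a22 a23 a24 a31 a32 a33 a34 a41 a42 a43 a44 b11 b12 b13 b14 b21 b22 b23 b24 b31 b32 b33 b34 b41 b42 b43 b44 : α) :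
    !![a11, a12, a13, a14; a21, a22, a23, a24; a31, a32, a33, a34; a41, a42, a43, a44] * !![b11, b12, b13, b14; b21, b22, b23, b24; b31, b32, b33, b34; b41, b42, b43, b44] =
    !![a11*b11 + a12*b21 + a13*b31 + a14*b41, a11*b12 + a12*b22 + a13*b32 + a14*b42, a11*b13 + a12*b23 + a13*b33 + a14*b43, a11*b14 + a12*b24 + a13*b34 + a14*b44; a21*b11 + a22*b21 + a23*b31 + a24*b41, a21*b12 + a22*b22 + a23*b32 + a24*b42, a21*b13 + a22*b23 + a23*b33 + a24*b43, a21*b14 + a22*b24 + a23*b34 + a24*b44; a31*b11 + a32*b21 + a33*b31 + a34*b41, a31*b12 + a32*b22 + a33*b32 + a34*b42, a31*b13 + a32*b23 + a33*b33 + a34*b43, a31*b14 + a32*b24 + a33*b34 + a34*b44; a41*b11 + a42*b21 + a43*b31 + a44*b41, a41*b12 + a42*b22 + a43*b32 + a44*b42, a41*b13 + a42*b23 + a43*b33 + a44*b43, a41*b14 + a42*b24 + a43*b34 + a44*b44] := by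
  ext i j
  fin_cases i <;> fin_cases j <;>
    simp [Matrix.mul_apply, Fin.sum_univ_four]

/-- For the explicit integer matrices `A` and `B` below, the characteristic polynomial of
`A⁴·B·A·B` is `X⁴ - 2X³ - 30X² - 2X + 1`. -/
theorem stmt_14 (A B : Matrix (Fin 4) (Fin 4) ℤ)
    (hA : A = !![-1, 0, -1, -1; 0, 1, 0, 0; 0, 0, 0, -1; 0, 0, -1, 0])
    (hB : B = !![0, 1, 0, 0; 1, 0, 0, 0; -1, 1, -1, 0; 0, 0, 0, 1]) :
    Matrix.charpoly (A ^ 4 * B * A * B) =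
      X ^ 4 - 2 * X ^ 3 - 30 * X ^ 2 - 2 * X + 1 := by
  have hM : A ^ 4 * B * A * B = !![5, 4, 0, 8; 1, -2, 1, -1; 0, 2, -1, 2; 1, -1, 1, 0] := by
    have h4 : A ^ 4 = A * A * A * A := by rw [pow_succ, pow_succ, pow_succ, pow_one]
    subst hA hB
    rw [h4]
    norm_num [mul_fin_four']
  rw [hM, Matrix.charpoly]
  rw [show (!![5, 4, 0, 8; 1, -2, 1, -1; 0, 2, -1, 2; 1, -1, 1, 0] : Matrix (Fin 4) (Fin 4) ℤ).charmatrix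
      = !![X - 5, -4, 0, -8; -1, X + 2, -1, 1; 0, -2, X + 1, -2; -1, 1, -1, X] from by
    ext i j
    fin_cases i <;> fin_cases j <;>
      simp [charmatrix_apply, Matrix.one_apply]]
  simp [Matrix.det_succ_row_zero, Fin.sum_univ_succ, Matrix.det_fin_three, Matrix.submatrix_apply,
    Fin.succ_ne_zero, Fin.succAbove, Fin.castSucc, Fin.castAdd, Fin.castLE, -Fin.val_fin_lt]
  ring
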